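/- Let G be a digraph and let x ∈ V(G) be a vertex such that χ⃗(G − x) < χ⃗(G). Then for every χ⃗(G − x)-dicolouring φ of G − x and every colour c in the image of φ, there exists a directed walk in G − x all of whose vertices have colour c, starting at an out-neighbour of x and ending at an in-neighbour of x (possibly a single-vertex walk). In particular, min(d^+(x), d^−(x)) ≥ χ⃗(G) − 1. -/

import Mathlib

/-- A (simple) digraph: a finite vertex set (of naturals) together with a finite
set of arcs between distinct vertices. -/
structure FDigraph where
  verts : Finset ℕ
  arcs : Finset (ℕ × ℕ)
  wf : ∀ a ∈ arcs, a.1 ∈ verts ∧ a.2 ∈ verts ∧ a.1 ≠ a.2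

namespace FDigraph

/-- Smart constructor: keeps only the legal arcs. -/
def mk' (V : Finset ℕ) (A : Finset (ℕ × ℕ)) : FDigraph where
  verts := V
  arcs := A.filter fun a => a.1 ∈ V ∧ a.2 ∈ V ∧ a.1 ≠ a.2
  wf := by
    intro a ha
    simp only [Finset.mem_filter] at ha
    exact ha.2

/-- A directed cycle, given as its (nonempty, duplicate-free) list of vertices:
every cyclically consecutive pair is an arc. -/
def IsDicycle (G : FDigraph) (l : List ℕ) : Prop :=
  l ≠ [] ∧ l.Nodup ∧ ∀ p ∈ l.zip (l.rotate 1), p ∈ G.arcs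

/-- A set of vertices is acyclic if it contains no directed cycle. -/
def AcyclicOn (G : FDigraph) (S : Set ℕ) : Prop :=
  ¬ ∃ l, G.IsDicycle l ∧ ∀ v ∈ l, v ∈ S

/-- A `k`-dicolouring: colours `0, …, k-1`, every colour class acyclic. -/
def IsDicolouring (G : FDigraph) (k : ℕ) (φ : ℕ → ℕ) : Prop :=
  (∀ v ∈ G.verts, φ v < k) ∧ ∀ c, G.AcyclicOn {v | φ v = c}

/-- The dichromatic number. -/
noncomputable def dichi (G : FDigraph) : ℕ := sInf {k | ∃ φ, G.IsDicolouring k φ}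

/-- Subdigraph relation. -/
def Subdigraph (H G : FDigraph) : Prop := H.verts ⊆ G.verts ∧ H.arcs ⊆ G.arcs

/-- `G` is `k`-dicritical. -/
def Dicritical (G : FDigraph) (k : ℕ) : Prop :=
  G.dichi = k ∧ ∀ H, Subdigraph H G → H ≠ G → H.dichi ≤ k - 1

/-- Induced subdigraph on a finite set of vertices. -/
def induce (G : FDigraph) (S : Finset ℕ) : FDigraph := mk' (G.verts ∩ S) G.arcs

def outDeg (G : FDigraph) (v : ℕ) : ℕ := (G.arcs.filter fun a => a.1 = v).card
def inDeg (G : FDigraph) (v : ℕ) : ℕ := (G.arcs.filter fun a => a.2 = v).card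
def deg (G : FDigraph) (v : ℕ) : ℕ := G.outDeg v + G.inDeg v

/-- Weak adjacency: an arc in either direction. -/
def wadj (G : FDigraph) (u v : ℕ) : Prop := (u, v) ∈ G.arcs ∨ (v, u) ∈ G.arcs

/-- Weak reachability. -/
def WReach (G : FDigraph) : ℕ → ℕ → Prop := Relation.ReflTransGen G.wadj

/-- A digraph is connected when its underlying graph is connected
(the empty digraph counts as connected). -/
def Connected (G : FDigraph) : Prop := ∀ u ∈ G.verts, ∀ v ∈ G.verts, G.WReach u v

/-- The set of connected components. -/
def components (G : FDigraph) : Set (Set ℕ) :=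
  {C | ∃ v ∈ G.verts, C = {u | u ∈ G.verts ∧ G.WReach v u}}

/-- The number of connected components. -/
noncomputable def numComponents (G : FDigraph) : ℕ := G.components.ncard

/-- Isomorphism of digraphs. -/
def Iso (G H : FDigraph) : Prop :=
  ∃ f : ℕ → ℕ, Set.BijOn f ↑G.verts ↑H.verts ∧
    ∀ u ∈ G.verts, ∀ v ∈ G.verts, ((u, v) ∈ G.arcs ↔ (f u, f v) ∈ H.arcs)

/-- The bidirected (complete) digraph `↔K_n`. -/
def completeD (n : ℕ) : FDigraph := mk' (Finset.range n) (Finset.range n ×ˢ Finset.range n)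

/-- The directed cycle `C⃗_n`. -/
def dirCycle (n : ℕ) : FDigraph :=
  mk' (Finset.range n)
    ((Finset.range n ×ˢ Finset.range n).filter fun a => a.2 = (a.1 + 1) % n)

/-- The bidirected cycle `↔C_n`. -/
def biCycle (n : ℕ) : FDigraph :=
  mk' (Finset.range n)
    ((Finset.range n ×ˢ Finset.range n).filter fun a =>
      a.2 = (a.1 + 1) % n ∨ a.1 = (a.2 + 1) % n)

/-- The Dirac join of `↔K_{k-2}` (on `{0,…,k-3}`) and the directed triangle
`C⃗_3` (on `{k-2, k-1, k}`). -/
def diracJoinExample (k : ℕ) : FDigraph :=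
  mk' (Finset.range (k + 1))
    ((Finset.range (k + 1) ×ˢ Finset.range (k + 1)).filter fun a =>
      a.1 < k - 2 ∨ a.2 < k - 2 ∨ a.2 = (if a.1 = k then k - 2 else a.1 + 1))

end FDigraph


lemma mem_zip_rotate {l : List ℕ} {p : ℕ × ℕ} :
    p ∈ l.zip (l.rotate 1) ↔ ∃ (i : ℕ) (h : i < l.length),
      p = (l[i], l[(i+1) % l.length]'(Nat.mod_lt _ (by omega))) := by
  have hlen : (l.zip (l.rotate 1)).length = l.length := by
    simp [List.length_zip, List.length_rotate]
  rw [List.mem_iff_getElem]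
  constructor
  · rintro ⟨i, hi, rfl⟩
    rw [hlen] at hi
    refine ⟨i, hi, ?_⟩
    have h2 : i < (l.rotate 1).length := by simpa [List.length_rotate]
    have := List.get_rotate l 1 ⟨i, h2⟩
    simp only [List.get_eq_getElem] at this
    simp [List.getElem_zip, this]
  · rintro ⟨i, hi, rfl⟩
    refine ⟨i, by omega, ?_⟩
    have h2 : i < (l.rotate 1).length := by simpa [List.length_rotate]
    have := List.get_rotate l 1 ⟨i, h2⟩
    simp only [List.get_eq_getElem] at this
    simp [List.getElem_zip, this]

namespace FDigraph

lemma IsDicycle.two_le_length {G : FDigraph} {l : List ℕ} (hc : G.IsDicycle l) :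
    2 ≤ l.length := by
  obtain ⟨hne, hnd, hp⟩ := hc
  by_contra h
  push_neg at h
  have hpos : 0 < l.length := List.length_pos_iff.mpr hne
  have h1 : l.length = 1 := by omega
  have h0 : (0:ℕ) < l.length := by omega
  have := hp (l[0], l[(0+1) % l.length]'(Nat.mod_lt _ (by omega)))
    (mem_zip_rotate.mpr ⟨0, h0, rfl⟩)
  have hmod : (0+1) % l.length = 0 := by rw [h1]
  have hwf := G.wf _ this
  simp only [hmod] at hwf
  exact hwf.2.2 rfl

lemma IsDicycle.mem_verts {G : FDigraph} {l : List ℕ} (hc : G.IsDicycle l)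
    {v : ℕ} (hv : v ∈ l) : v ∈ G.verts := by
  obtain ⟨i, hi, rfl⟩ := List.mem_iff_getElem.mp hv
  have := hc.2.2 (l[i], l[(i+1) % l.length]'(Nat.mod_lt _ (by omega)))
    (mem_zip_rotate.mpr ⟨i, hi, rfl⟩)
  exact (G.wf _ this).1

lemma IsDicycle.rotate {G : FDigraph} {l : List ℕ} (hc : G.IsDicycle l) (n : ℕ) :
    G.IsDicycle (l.rotate n) := by
  obtain ⟨hne, hnd, hp⟩ := hc
  refine ⟨by simpa [List.rotate_eq_nil_iff], List.nodup_rotate.mpr hnd, ?_⟩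
  intro p hpmem
  rw [mem_zip_rotate] at hpmem
  obtain ⟨i, hi, rfl⟩ := hpmem
  rw [List.length_rotate] at hi
  have hL : 0 < l.length := by omega
  have h1 : i < (l.rotate n).length := by simpa [List.length_rotate]
  have h2 : (i+1) % l.length < (l.rotate n).length := by
    rw [List.length_rotate]; exact Nat.mod_lt _ hL
  have e1 := List.get_rotate l n ⟨i, h1⟩
  have e2 := List.get_rotate l n ⟨(i+1) % (l.rotate n).length, by simp only [List.length_rotate]; exact Nat.mod_lt _ hL⟩
  simp only [List.get_eq_getElem, List.length_rotate] at e1 e2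
  have hj : (i + n) % l.length < l.length := Nat.mod_lt _ hL
  have hmod : ((i+1) % l.length + n) % l.length = ((i + n) % l.length + 1) % l.length := by
    rw [Nat.mod_add_mod, Nat.mod_add_mod]
    ring_nf
  apply hp
  rw [mem_zip_rotate]
  refine ⟨(i + n) % l.length, hj, ?_⟩
  rw [e1]
  congr 1
  simp only [List.length_rotate]
  rw [e2]
  simp only [hmod]

lemma cycle_walk {G : FDigraph} {x : ℕ} {t : List ℕ} (hc : G.IsDicycle (x :: t)) :
    ∃ hne : t ≠ [], (∀ v ∈ t, v ≠ x) ∧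
      t.Chain' (fun u v => (u, v) ∈ G.arcs) ∧
      (x, t.head hne) ∈ G.arcs ∧ (t.getLast hne, x) ∈ G.arcs := by
  have hL2 : 2 ≤ (x :: t).length := hc.two_le_length
  simp only [List.length_cons] at hL2
  have htne : t ≠ [] := by
    intro h; rw [h] at hL2; simp at hL2
  have hpair : ∀ (j : ℕ) (hj : j < t.length + 1),
      ((x :: t)[j]'(by simp; omega),
        (x :: t)[(j+1) % (t.length + 1)]'(by simp only [List.length_cons]; exact Nat.mod_lt _ (by omega))) ∈ G.arcs := by
    intro j hj
    apply hc.2.2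
    rw [mem_zip_rotate]
    refine ⟨j, by simp; omega, ?_⟩
    simp only [List.length_cons]
  refine ⟨htne, ?_, ?_, ?_, ?_⟩
  · intro v hv hvx
    have := hc.2.1
    rw [List.nodup_cons] at this
    exact this.1 (hvx ▸ hv)
  · show List.IsChain (fun u v => (u, v) ∈ G.arcs) t
    rw [List.isChain_iff_getElem]
    intro j hj
    have h1 := hpair (j+1) (by omega)
    have hmod : (j+1+1) % (t.length + 1) = j+2 := Nat.mod_eq_of_lt (by omega)
    simp only [hmod, List.getElem_cons_succ] at h1
    exact h1
  · have h0 := hpair 0 (by omega)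
    have hmod : (0+1) % (t.length + 1) = 1 := Nat.mod_eq_of_lt (by omega)
    simp only [hmod, List.getElem_cons_zero, List.getElem_cons_succ] at h0
    rw [List.head_eq_getElem]
    exact h0
  · have hl := hpair t.length (by omega)
    have hmod : (t.length+1) % (t.length + 1) = 0 := Nat.mod_self _
    have ht1 : t.length = (t.length - 1) + 1 := by
      have : 0 < t.length := List.length_pos_iff.mpr htne
      omega
    simp only [hmod, List.getElem_cons_zero] at hl
    have hgl : (x :: t).getLast (List.cons_ne_nil x t) = t.getLast htne := List.getLast_cons htne
    have hgl2 : (x :: t).getLast (List.cons_ne_nil x t) = (x :: t)[t.length]'(by simp) := by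
      rw [List.getLast_eq_getElem]
      simp
    rw [← hgl, hgl2]
    exact hl

lemma cycle_through {G : FDigraph} {l : List ℕ} {x : ℕ} (hc : G.IsDicycle l)
    (hx : x ∈ l) :
    ∃ (m : List ℕ) (hne : m ≠ []), (∀ v ∈ m, v ∈ l ∧ v ≠ x) ∧
      m.Chain' (fun u v => (u, v) ∈ G.arcs) ∧
      (x, m.head hne) ∈ G.arcs ∧ (m.getLast hne, x) ∈ G.arcs := by
  obtain ⟨i, hi, hix⟩ := List.mem_iff_getElem.mp hx
  have hrot := hc.rotate i
  have hne' : l.rotate i ≠ [] := by simpa [List.rotate_eq_nil_iff] using hc.1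
  cases h : l.rotate i with
  | nil => exact absurd h hne'
  | cons y t =>
    have hy : y = x := by
      have h0 : (l.rotate i)[0]'(by rw [List.length_rotate]; omega) = x := by
        have := List.get_rotate l i ⟨0, by rw [List.length_rotate]; omega⟩
        simp only [List.get_eq_getElem] at this
        rw [this]
        simpa [Nat.mod_eq_of_lt hi] using hix
      have a2 : (l.rotate i).head hne' = x := by rw [List.head_eq_getElem]; exact h0
      have a1 : (l.rotate i).head? = some y := by rw [h]; rfl
      rw [List.head?_eq_head hne', a2] at a1
      exact (Option.some_injective _ a1).symm
    rw [h, hy] at hrot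
    obtain ⟨htne, hnx, hch, hhd, hlst⟩ := cycle_walk hrot
    refine ⟨t, htne, ?_, hch, hhd, hlst⟩
    intro v hv
    refine ⟨?_, hnx v hv⟩
    have : v ∈ l.rotate i := by rw [h]; exact List.mem_cons_of_mem _ hv
    exact List.mem_rotate.mp this

lemma colourings_nonempty (G : FDigraph) :
    {k | ∃ φ, G.IsDicolouring k φ}.Nonempty := by
  refine ⟨(G.verts.sup id) + 1, id, ?_, ?_⟩
  · intro v hv
    have := Finset.le_sup (f := id) hv
    simpa using Nat.lt_succ_of_le this
  · intro c
    rintro ⟨l, hcyc, hcol⟩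
    have h2 := hcyc.two_le_length
    have h0 : (0:ℕ) < l.length := by omega
    have h1 : (1:ℕ) < l.length := by omega
    have e0 : l[0] = c := hcol _ (List.getElem_mem h0)
    have e1 : l[1] = c := hcol _ (List.getElem_mem h1)
    have := (hcyc.2.1.getElem_inj_iff (hi := h0) (hj := h1)).mp (e0.trans e1.symm)
    omega

lemma exists_opt_colouring (G : FDigraph) : ∃ φ, G.IsDicolouring G.dichi φ :=
  Nat.sInf_mem G.colourings_nonempty

lemma dichi_le {G : FDigraph} {k : ℕ} (h : ∃ φ, G.IsDicolouring k φ) :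
    G.dichi ≤ k :=
  Nat.sInf_le h

lemma induce_verts_eq (G : FDigraph) {S : Finset ℕ} (hS : S ⊆ G.verts) :
    (G.induce S).verts = S := by
  simp only [induce, mk']
  exact Finset.inter_eq_right.mpr hS

lemma cycle_in_induce {G : FDigraph} {S : Finset ℕ} {l : List ℕ}
    (hc : G.IsDicycle l) (hS : ∀ v ∈ l, v ∈ S) : (G.induce S).IsDicycle l := by
  refine ⟨hc.1, hc.2.1, ?_⟩
  intro p hp
  have harc := hc.2.2 p hp
  obtain ⟨i, hi, rfl⟩ := mem_zip_rotate.mp hp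
  have hm1 : l[i] ∈ l := List.getElem_mem hi
  have hm2 : l[(i+1) % l.length]'(Nat.mod_lt _ (by omega)) ∈ l := List.getElem_mem _
  have hwf := G.wf _ harc
  simp only [induce, mk', Finset.mem_filter]
  refine ⟨harc, Finset.mem_inter.mpr ⟨hwf.1, hS _ hm1⟩,
    Finset.mem_inter.mpr ⟨hwf.2.1, hS _ hm2⟩, hwf.2.2⟩

/-- The key walk lemma. -/
lemma walk_of_colour (G : FDigraph) (x : ℕ)
    (hlt : (G.induce (G.verts.erase x)).dichi < G.dichi)
    (φ : ℕ → ℕ)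
    (hφ : (G.induce (G.verts.erase x)).IsDicolouring ((G.induce (G.verts.erase x)).dichi) φ)
    (c : ℕ) (hc : ∃ v ∈ G.verts.erase x, φ v = c) :
    ∃ (l : List ℕ) (hne : l ≠ []),
      (∀ v ∈ l, v ∈ G.verts.erase x) ∧
      l.Chain' (fun u v => (u, v) ∈ G.arcs) ∧
      (x, l.head hne) ∈ G.arcs ∧
      (l.getLast hne, x) ∈ G.arcs ∧
      ∀ v ∈ l, φ v = c := by
  set S := G.verts.erase x with hSdef
  set k := (G.induce S).dichi with hkdef
  have hverts : (G.induce S).verts = S := G.induce_verts_eq (Finset.erase_subset _ _)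
  by_contra hno
  set φ' := Function.update φ x c with hφ'def
  have hφ'x : φ' x = c := Function.update_self x c φ
  have hφ'v : ∀ v, v ≠ x → φ' v = φ v := fun v hv => Function.update_of_ne hv c φ
  have hcolG : G.IsDicolouring k φ' := by
    constructor
    · intro v hv
      by_cases hvx : v = x
      · subst hvx
        rw [hφ'x]
        obtain ⟨v0, hv0, hv0c⟩ := hc
        have := hφ.1 v0 (by rw [hverts]; exact hv0)
        omega
      · rw [hφ'v v hvx]
        exact hφ.1 v (by rw [hverts]; exact Finset.mem_erase.mpr ⟨hvx, hv⟩)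
    · intro c'
      rintro ⟨l, hcyc, hcol⟩
      replace hcol : ∀ v ∈ l, φ' v = c' := hcol
      by_cases hxl : x ∈ l
      · have hc'c : c = c' := by rw [← hφ'x]; exact hcol x hxl
        obtain ⟨m, hne, hmem, hch, hhd, hlst⟩ := cycle_through hcyc hxl
        apply hno
        refine ⟨m, hne, ?_, hch, hhd, hlst, ?_⟩
        · intro v hv
          obtain ⟨hvl, hvx⟩ := hmem v hv
          exact Finset.mem_erase.mpr ⟨hvx, hcyc.mem_verts hvl⟩
        · intro v hv
          obtain ⟨hvl, hvx⟩ := hmem v hv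
          rw [← hφ'v v hvx, hcol v hvl, ← hc'c]
      · apply hφ.2 c'
        refine ⟨l, cycle_in_induce hcyc ?_, ?_⟩
        · intro v hv
          exact Finset.mem_erase.mpr ⟨fun h => hxl (h ▸ hv), hcyc.mem_verts hv⟩
        · intro v hv
          show φ v = c'
          rw [← hφ'v v (fun h => hxl (h ▸ hv))]
          exact hcol v hv
  have := dichi_le ⟨φ', hcolG⟩
  omega

lemma dichi_le_succ (G : FDigraph) (x : ℕ) :
    G.dichi ≤ (G.induce (G.verts.erase x)).dichi + 1 := by
  set S := G.verts.erase x with hSdef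
  set k := (G.induce S).dichi with hkdef
  have hverts : (G.induce S).verts = S := G.induce_verts_eq (Finset.erase_subset _ _)
  obtain ⟨φ, hφ⟩ := (G.induce S).exists_opt_colouring
  apply dichi_le
  refine ⟨Function.update φ x k, ?_, ?_⟩
  · intro v hv
    by_cases hvx : v = x
    · subst hvx; rw [Function.update_self]; omega
    · rw [Function.update_of_ne hvx]
      have := hφ.1 v (by rw [hverts]; exact Finset.mem_erase.mpr ⟨hvx, hv⟩)
      omega
  · intro c'
    rintro ⟨l, hcyc, hcol⟩
    replace hcol : ∀ v ∈ l, Function.update φ x k v = c' := hcol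
    by_cases hxl : x ∈ l
    · have hck : c' = k := by
        rw [← hcol x hxl, Function.update_self]
      have h2 := hcyc.two_le_length
      have h0 : (0:ℕ) < l.length := by omega
      have h1 : (1:ℕ) < l.length := by omega
      have hne01 : l[0] ≠ l[1] := by
        intro h
        have := (hcyc.2.1.getElem_inj_iff (hi := h0) (hj := h1)).mp h
        omega
      have key : ∀ (j : ℕ) (hj : j < l.length), l[j] ≠ x → False := by
        intro j hj hjx
        have hmem := List.getElem_mem hj
        have := hcol _ hmem
        rw [Function.update_of_ne hjx] at this
        have hvS : l[j] ∈ S :=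
          Finset.mem_erase.mpr ⟨hjx, hcyc.mem_verts hmem⟩
        have := hφ.1 _ (by rw [hverts]; exact hvS)
        omega
      by_cases hx0 : l[0] = x
      · exact key 1 h1 (by rw [← hx0]; exact fun h => hne01 h.symm)
      · exact key 0 h0 hx0
    · apply hφ.2 c'
      refine ⟨l, cycle_in_induce hcyc ?_, ?_⟩
      · intro v hv
        exact Finset.mem_erase.mpr ⟨fun h => hxl (h ▸ hv), hcyc.mem_verts hv⟩
      · intro v hv
        show φ v = c'
        rw [← hcol v hv, Function.update_of_ne (show v ≠ x from fun h => hxl (h ▸ hv))]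

lemma colour_used {H : FDigraph} {φ : ℕ → ℕ} (hφ : H.IsDicolouring H.dichi φ)
    {c : ℕ} (hck : c < H.dichi) : ∃ v ∈ H.verts, φ v = c := by
  by_contra hun
  push_neg at hun
  set k := H.dichi with hkdef
  have hk1 : 1 ≤ k := by omega
  have hcolnew : H.IsDicolouring (k - 1) (fun v => if φ v = k - 1 then c else φ v) := by
    constructor
    · intro v hv
      have hvb := hφ.1 v hv
      have hvc := hun v hv
      by_cases hb : φ v = k - 1 <;> simp [hb] <;> omega
    · intro c'
      rintro ⟨l, hcyc, hcol⟩
      replace hcol : ∀ v ∈ l, (if φ v = k - 1 then c else φ v) = c' := hcol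
      apply hφ.2 (if c' = c then k - 1 else c')
      refine ⟨l, hcyc, ?_⟩
      intro v hv
      show φ v = _
      have hvv := hcol v hv
      have hvnc := hun v (hcyc.mem_verts hv)
      by_cases hb : φ v = k - 1
      · rw [if_pos hb] at hvv
        rw [if_pos hvv.symm]
        exact hb
      · rw [if_neg hb] at hvv
        rw [if_neg (show c' ≠ c from fun h => hvnc (by rw [hvv, h]))]
        exact hvv
  have := dichi_le ⟨_, hcolnew⟩
  omega

end FDigraph
/-- if `χ⃗(G - x) < χ⃗(G)` then in every optimal dicolouring of
`G - x` each used colour carries a monochromatic directed walk from an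
out-neighbour of `x` to an in-neighbour of `x`; in particular
`min(d⁺(x), d⁻(x)) ≥ χ⃗(G) - 1`. -/
theorem low_vertex_walks (G : FDigraph) (x : ℕ) (hx : x ∈ G.verts)
    (hlt : (G.induce (G.verts.erase x)).dichi < G.dichi) :
    (∀ φ : ℕ → ℕ,
      (G.induce (G.verts.erase x)).IsDicolouring ((G.induce (G.verts.erase x)).dichi) φ →
      ∀ c, (∃ v ∈ G.verts.erase x, φ v = c) →
        ∃ (l : List ℕ) (hne : l ≠ []),
          (∀ v ∈ l, v ∈ G.verts.erase x) ∧
          l.Chain' (fun u v => (u, v) ∈ G.arcs) ∧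
          (x, l.head hne) ∈ G.arcs ∧
          (l.getLast hne, x) ∈ G.arcs ∧
          ∀ v ∈ l, φ v = c) ∧
    G.dichi - 1 ≤ min (G.outDeg x) (G.inDeg x) := by
  constructor
  · intro φ hφ c hc
    exact G.walk_of_colour x hlt φ hφ c hc
  · set S := G.verts.erase x with hSdef
    set k := (G.induce S).dichi with hkdef
    have hverts : (G.induce S).verts = S := G.induce_verts_eq (Finset.erase_subset _ _)
    obtain ⟨φ, hφ⟩ := (G.induce S).exists_opt_colouring
    have hwalk : ∀ c, c < k → ∃ (l : List ℕ) (hne : l ≠ []),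
        (∀ v ∈ l, v ∈ S) ∧
        l.Chain' (fun u v => (u, v) ∈ G.arcs) ∧
        (x, l.head hne) ∈ G.arcs ∧
        (l.getLast hne, x) ∈ G.arcs ∧
        ∀ v ∈ l, φ v = c := by
      intro c hck
      apply G.walk_of_colour x hlt φ hφ c
      obtain ⟨v, hv, hvc⟩ := FDigraph.colour_used hφ hck
      exact ⟨v, by rwa [hverts] at hv, hvc⟩
    choose lw hne hmem hch hhd hlst hcol using hwalk
    have hout : k ≤ G.outDeg x := by
      rw [FDigraph.outDeg, ← Finset.card_range k]
      apply Finset.card_le_card_of_injOn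
        (fun c => if h : c < k then (x, (lw c h).head (hne c h)) else (0, 0))
      · intro c hc
        rw [Finset.mem_coe, Finset.mem_range] at hc
        simp only [Finset.mem_coe]
        rw [dif_pos hc, Finset.mem_filter]
        exact ⟨hhd c hc, rfl⟩
      · intro c hc c' hc' heq
        simp only [Finset.coe_range, Set.mem_Iio] at hc hc'
        simp only [dif_pos hc, dif_pos hc'] at heq
        have h1 : φ ((lw c hc).head (hne c hc)) = c :=
          hcol c hc _ (List.head_mem _)
        have h2 : φ ((lw c' hc').head (hne c' hc')) = c' :=
          hcol c' hc' _ (List.head_mem _)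
        rw [← h1, ← h2, (Prod.mk.injEq _ _ _ _).mp heq |>.2]
    have hin : k ≤ G.inDeg x := by
      rw [FDigraph.inDeg, ← Finset.card_range k]
      apply Finset.card_le_card_of_injOn
        (fun c => if h : c < k then ((lw c h).getLast (hne c h), x) else (0, 0))
      · intro c hc
        rw [Finset.mem_coe, Finset.mem_range] at hc
        simp only [Finset.mem_coe]
        rw [dif_pos hc, Finset.mem_filter]
        exact ⟨hlst c hc, rfl⟩
      · intro c hc c' hc' heq
        simp only [Finset.coe_range, Set.mem_Iio] at hc hc'
        simp only [dif_pos hc, dif_pos hc'] at heq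
        have h1 : φ ((lw c hc).getLast (hne c hc)) = c :=
          hcol c hc _ (List.getLast_mem _)
        have h2 : φ ((lw c' hc').getLast (hne c' hc')) = c' :=
          hcol c' hc' _ (List.getLast_mem _)
        rw [← h1, ← h2, (Prod.mk.injEq _ _ _ _).mp heq |>.1]
    have hsucc := G.dichi_le_succ x
    rw [← hSdef, ← hkdef] at hsucc
    have hk1 : G.dichi - 1 ≤ k := by omega
    exact le_min (hk1.trans hout) (hk1.trans hin)
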